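/- arXiv:0807.2275 — 2 statements merged into one kernel-verified Lean document; each statement's English description precedes it below -/
import Mathlib

section
/- For every z ∈ ℂ and every u ∈ ℂ, the directional derivative of T(z) = z/(1+|z|) in direction u satisfies |∂_u T(z)| ≤ |u|/(1+|z|) ≤ |u|. -/
/-- The directional derivative of `T z = z / (1 + |z|)` at `z` in direction `u`. -/
noncomputable def dirDerivT (z u : ℂ) : ℂ :=
  if z = 0 then u else
    u * (2 + (‖z‖ : ℂ)) / (2 * (1 + (‖z‖ : ℂ))^2)
    - (starRingEnd ℂ) u * z^2 / (2 * (‖z‖ : ℂ) * (1 + (‖z‖ : ℂ))^2)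

theorem dirDerivT_bound (z u : ℂ) :
    ‖dirDerivT z u‖ ≤ ‖u‖ / (1 + ‖z‖) ∧
    ‖u‖ / (1 + ‖z‖) ≤ ‖u‖ := by
  have hr0 : 0 ≤ ‖z‖ := norm_nonneg z
  have h1r : (1:ℝ) ≤ 1 + ‖z‖ := by linarith
  constructor
  · unfold dirDerivT
    split_ifs with h
    · simp [h]
    · have hrpos : 0 < ‖z‖ := norm_pos_iff.mpr h
      set r := ‖z‖ with hr
      have habs1 : ‖u * (2 + (r:ℂ)) / (2 * (1 + (r:ℂ))^2)‖
          = ‖u‖ * (2 + r) / (2 * (1 + r)^2) := by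
        rw [norm_div, norm_mul, norm_mul, norm_pow]
        rw [show ((2:ℂ)+(r:ℂ)) = ((2+r : ℝ):ℂ) by push_cast; ring,
          show ((1:ℂ)+(r:ℂ)) = ((1+r : ℝ):ℂ) by push_cast; ring]
        rw [Complex.norm_real, Complex.norm_real, Complex.norm_two,
          Real.norm_of_nonneg (by linarith : (0:ℝ) ≤ 2 + r),
          Real.norm_of_nonneg (by linarith : (0:ℝ) ≤ 1 + r)]
      have habs2 : ‖(starRingEnd ℂ) u * z^2 / (2 * (r:ℂ) * (1 + (r:ℂ))^2)‖
          = ‖u‖ * r^2 / (2 * r * (1 + r)^2) := by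
        rw [norm_div, norm_mul, norm_mul, norm_mul, norm_pow, norm_pow, Complex.norm_conj]
        rw [show ((1:ℂ)+(r:ℂ)) = ((1+r : ℝ):ℂ) by push_cast; ring]
        rw [Complex.norm_two, ← hr]
        simp only [Complex.norm_real]
        rw [Real.norm_of_nonneg hr0, Real.norm_of_nonneg (by linarith : (0:ℝ) ≤ 1 + r)]
      calc ‖u * (2 + (r:ℂ)) / (2 * (1 + (r:ℂ))^2)
              - (starRingEnd ℂ) u * z^2 / (2 * (r:ℂ) * (1 + (r:ℂ))^2)‖
          ≤ ‖u * (2 + (r:ℂ)) / (2 * (1 + (r:ℂ))^2)‖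
            + ‖(starRingEnd ℂ) u * z^2 / (2 * (r:ℂ) * (1 + (r:ℂ))^2)‖ :=
            norm_sub_le _ _
        _ = ‖u‖ * (2 + r) / (2 * (1 + r)^2)
            + ‖u‖ * r^2 / (2 * r * (1 + r)^2) := by rw [habs1, habs2]
        _ = ‖u‖ / (1 + r) := by
            field_simp
            ring
  · exact div_le_self (norm_nonneg u) h1r
end

section
/- The Fréchet derivative of T(z) = z/(1+|z|), as an ℝ-linear map on ℝ² ≅ ℂ, is jointly continuous in z: the map z ↦ T'_z is continuous from ℂ into the space of continuous ℝ-linear maps ℂ → ℂ with the operator norm. -/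
noncomputable def T : ℂ → ℂ := fun z => z / (1 + (‖z‖ : ℂ))

open Complex RealInnerProductSpace Asymptotics

noncomputable def conjCLM : ℂ →L[ℝ] ℂ := Complex.conjCLE.toContinuousLinearMap

lemma conjCLM_apply (u : ℂ) : conjCLM u = starRingEnd ℂ u := rfl

noncomputable def Dmap (z : ℂ) : ℂ →L[ℝ] ℂ :=
  ((((2 + ‖z‖) / (2 * (1 + ‖z‖) ^ 2) : ℝ)) : ℂ) • ContinuousLinearMap.id ℝ ℂ
    + (-(z ^ 2 / (‖z‖ : ℂ)) / (2 * (1 + (‖z‖ : ℂ)) ^ 2)) • conjCLM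

lemma T_eq : T = fun w : ℂ => w * ((1 : ℂ) + (‖w‖ : ℂ))⁻¹ := by
  funext w
  simp [T, div_eq_mul_inv]

lemma one_add_norm_ne (w : ℂ) : (1 : ℂ) + (‖w‖ : ℂ) ≠ 0 := by
  have h : (1 + ‖w‖ : ℝ) ≠ 0 := by positivity
  exact_mod_cast h

lemma key (r z c u v : ℂ) (hr : r ≠ 0) (h1 : 1 + r ≠ 0) (hzc : z * c = r ^ 2) :
    ((2 + r) / (2 * (1 + r) ^ 2)) * u + (-(z ^ 2 / r) / (2 * (1 + r) ^ 2)) * v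
      = z * -((1 + r)⁻¹ * (r⁻¹ * ((c * u + z * v) / 2)) * (1 + r)⁻¹) + (1 + r)⁻¹ * u := by
  have h2 : (2:ℂ) ≠ 0 := two_ne_zero
  have hA : (2:ℂ) * (1 + r) ^ 2 * (r * (2 * (1 + r) ^ 2)) ≠ 0 := by
    apply mul_ne_zero (mul_ne_zero h2 (pow_ne_zero _ h1))
    exact mul_ne_zero hr (mul_ne_zero h2 (pow_ne_zero _ h1))
  have hB : (1 + r) * (r * 2) * (1 + r) * (1 + r) ≠ 0 := by
    exact mul_ne_zero (mul_ne_zero (mul_ne_zero h1 (mul_ne_zero hr h2)) h1) h1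
  field_simp
  linear_combination u * hzc

lemma hasFDerivAt_Dmap (z : ℂ) : HasFDerivAt T (Dmap z) z := by
  rw [T_eq]
  by_cases hz : z = 0
  · subst hz
    have hD : Dmap 0 = ContinuousLinearMap.id ℝ ℂ := by
      ext u
      simp [Dmap, conjCLM_apply]
    rw [hD]
    rw [hasFDerivAt_iff_isLittleO_nhds_zero]
    simp only [zero_add, norm_zero, Complex.ofReal_zero, add_zero, inv_one, mul_one,
      ContinuousLinearMap.id_apply, sub_self, sub_zero]
    rw [isLittleO_iff]
    intro ε hε
    rw [Metric.eventually_nhds_iff]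
    refine ⟨ε, hε, fun w hw => ?_⟩
    have hw' : ‖w‖ < ε := by simpa [dist_eq_norm] using hw
    have key2 : w * ((1 : ℂ) + (‖w‖ : ℂ))⁻¹ - w = w * (((1 + ‖w‖ : ℝ)⁻¹ - 1 : ℝ) : ℂ) := by
      push_cast
      ring
    rw [key2, norm_mul]
    have h1 : ‖((((1 + ‖w‖ : ℝ)⁻¹ - 1 : ℝ)) : ℂ)‖ = |(1 + ‖w‖ : ℝ)⁻¹ - 1| := by
      rw [Complex.norm_real, Real.norm_eq_abs]
    have h2 : |(1 + ‖w‖ : ℝ)⁻¹ - 1| ≤ ‖w‖ := by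
      have hpos : (0:ℝ) < 1 + ‖w‖ := by positivity
      have heq : (1 + ‖w‖ : ℝ)⁻¹ - 1 = -(‖w‖ / (1 + ‖w‖)) := by field_simp; ring
      rw [heq, abs_neg, _root_.abs_of_nonneg (show (0:ℝ) ≤ ‖w‖ / (1 + ‖w‖) by positivity)]
      exact div_le_self (norm_nonneg w) (by linarith [norm_nonneg w])
    calc ‖w‖ * ‖((((1 + ‖w‖ : ℝ)⁻¹ - 1 : ℝ)) : ℂ)‖ ≤ ‖w‖ * ‖w‖ := by
          rw [h1]; exact mul_le_mul_of_nonneg_left h2 (norm_nonneg w)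
      _ ≤ ε * ‖w‖ := mul_le_mul_of_nonneg_right hw'.le (norm_nonneg w)
  · -- z ≠ 0
    have hr : (0:ℝ) < ‖z‖ := norm_pos_iff.mpr hz
    have hnorm : HasFDerivAt (fun w : ℂ => ‖w‖) (‖z‖⁻¹ • innerSL ℝ z) z := by
      have h1 : HasFDerivAt (fun w : ℂ => ‖w‖ ^ 2) (2 • innerSL ℝ z) z := by
        simpa using (hasFDerivAt_id z).norm_sq
      have h2 := h1.sqrt (by positivity)
      have hfun : (fun w : ℂ => Real.sqrt (‖w‖ ^ 2)) = fun w : ℂ => ‖w‖ := by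
        funext w; exact Real.sqrt_sq (norm_nonneg w)
      rw [hfun] at h2
      convert h2 using 1
      ext u
      have hs : Real.sqrt (‖z‖ ^ 2) = ‖z‖ := Real.sqrt_sq (norm_nonneg z)
      simp [hs, smul_smul]
      field_simp
      ring
      rw [Real.sqrt_sq (norm_nonneg z)]
      ext u
      simp
      field_simp
    have hd : HasFDerivAt (fun w : ℂ => (1 : ℂ) + (‖w‖ : ℂ))
        (Complex.ofRealCLM.comp (‖z‖⁻¹ • innerSL ℝ z)) z := by
      exact ((Complex.ofRealCLM.hasFDerivAt.comp z hnorm).const_add 1)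
    have hinv : HasFDerivAt (fun w : ℂ => ((1 : ℂ) + (‖w‖ : ℂ))⁻¹)
        ((-ContinuousLinearMap.mulLeftRight ℝ ℂ ((1 : ℂ) + (‖z‖ : ℂ))⁻¹
          ((1 : ℂ) + (‖z‖ : ℂ))⁻¹).comp (Complex.ofRealCLM.comp (‖z‖⁻¹ • innerSL ℝ z))) z :=
      (hasFDerivAt_inv' (one_add_norm_ne z)).comp z hd
    have hmul := (hasFDerivAt_id z).mul hinv
    refine hmul.congr_fderiv (Eq.symm ?_)
    ext u
    have hinner : (innerSL ℝ z) u = ((starRingEnd ℂ z) * u).re := by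
      rw [innerSL_apply_apply, Complex.inner, mul_comm]
    have hre : (((((starRingEnd ℂ z) * u).re : ℝ)) : ℂ)
        = ((starRingEnd ℂ) z * u + z * (starRingEnd ℂ) u) / 2 := by
      rw [Complex.re_eq_add_conj]
      simp [mul_comm]
    have hrne : ((‖z‖ : ℝ) : ℂ) ≠ 0 := by
      rw [Complex.ofReal_ne_zero]; exact hr.ne'
    have h1r : (1 : ℂ) + (‖z‖ : ℂ) ≠ 0 := by
      exact one_add_norm_ne z
    have hzconj : z * (starRingEnd ℂ) z = ((‖z‖ : ℝ) : ℂ) ^ 2 := by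
      rw [Complex.mul_conj, Complex.normSq_eq_norm_sq]
      push_cast
      ring
    simp only [Dmap, ContinuousLinearMap.add_apply, ContinuousLinearMap.smul_apply,
      ContinuousLinearMap.id_apply, ContinuousLinearMap.coe_comp', Function.comp_apply,
      ContinuousLinearMap.neg_apply, ContinuousLinearMap.mulLeftRight_apply,
      Complex.ofRealCLM_apply, conjCLM_apply, smul_eq_mul, Complex.real_smul, id]
    rw [hinner]
    push_cast
    rw [hre]
    exact key ((‖z‖ : ℝ) : ℂ) z (starRingEnd ℂ z) u (starRingEnd ℂ u)
      hrne h1r hzconj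

theorem T_fderiv_continuous :
    ∃ D : ℂ → (ℂ →L[ℝ] ℂ), (∀ z : ℂ, HasFDerivAt T (D z) z) ∧ Continuous D := by
  refine ⟨Dmap, hasFDerivAt_Dmap, ?_⟩
  have hg : Continuous fun z : ℂ => z ^ 2 / (‖z‖ : ℂ) := by
    rw [continuous_iff_continuousAt]
    intro z
    by_cases hz : z = 0
    · subst hz
      unfold ContinuousAt
      have h0 : ((fun z : ℂ => z ^ 2 / (‖z‖ : ℂ)) 0) = 0 := by simp
      rw [h0]
      apply squeeze_zero_norm (a := fun w : ℂ => ‖w‖)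
      · intro x
        by_cases hx : x = 0
        · simp [hx]
        · have hxr : (0:ℝ) < ‖x‖ := norm_pos_iff.mpr hx
          rw [norm_div, norm_pow]
          simp only [Complex.norm_real, norm_norm]
          rw [pow_two, mul_div_assoc, div_self hxr.ne', mul_one]
      · simpa using continuous_norm.tendsto (0 : ℂ)
    · have hne : ((‖z‖ : ℝ) : ℂ) ≠ 0 := by
        rw [Complex.ofReal_ne_zero]
        exact (norm_pos_iff.mpr hz).ne'
      exact ((continuous_pow 2).continuousAt).div
        ((Complex.continuous_ofReal.comp continuous_norm).continuousAt) hne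
  apply Continuous.add
  · apply Continuous.fun_smul _ continuous_const
    apply Complex.continuous_ofReal.comp
    apply Continuous.div
    · exact continuous_const.add continuous_norm
    · fun_prop
    · intro z; positivity
  · apply Continuous.fun_smul _ continuous_const
    apply Continuous.div
    · exact hg.neg
    · fun_prop
    · intro z
      have hpos : (0:ℝ) < 2 * (1 + ‖z‖) ^ 2 := by positivity
      have hne : ((2 * (1 + ‖z‖) ^ 2 : ℝ) : ℂ) ≠ 0 := by
        rw [Complex.ofReal_ne_zero]; exact hpos.ne'
      intro h
      apply hne
      rw [← h]
      push_cast
      ring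
end
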